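/- arXiv:2204.05275 — 6 statements merged into one kernel-verified Lean document; each statement's English description precedes it below -/
import Mathlib

section
/- For any p, q ∈ [1/2, 1) with p > q, the KL divergence of Bernoulli distributions satisfies KL(p ∥ q) ≤ KL(q ∥ p), where KL(p ∥ q) = p·log(p/q) + (1−p)·log((1−p)/(1−q)). -/
lemma two_log_le (t : ℝ) (ht : 1 ≤ t) : 2 * Real.log t ≤ t - t⁻¹ := by
  have hd : ∀ s : ℝ, 0 < s →
      HasDerivAt (fun s : ℝ => s - s⁻¹ - 2 * Real.log s) (1 - (-(s^2)⁻¹) - 2 * s⁻¹) s := by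
    intro s hs
    exact ((hasDerivAt_id s).sub (hasDerivAt_inv hs.ne')).sub
      ((Real.hasDerivAt_log hs.ne').const_mul 2)
  have hmono : MonotoneOn (fun s : ℝ => s - s⁻¹ - 2 * Real.log s) (Set.Ici 1) := by
    apply monotoneOn_of_deriv_nonneg (convex_Ici 1)
    · intro s hs
      have hs0 : (0:ℝ) < s := lt_of_lt_of_le one_pos hs
      exact (hd s hs0).continuousAt.continuousWithinAt
    · intro s hs
      rw [interior_Ici] at hs
      have hs0 : (0:ℝ) < s := lt_trans one_pos hs
      exact (hd s hs0).differentiableAt.differentiableWithinAt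
    · intro s hs
      rw [interior_Ici] at hs
      have hs0 : (0:ℝ) < s := lt_trans one_pos hs
      rw [(hd s hs0).deriv]
      have : 1 - (-(s^2)⁻¹) - 2 * s⁻¹ = (1 - s⁻¹)^2 := by
        field_simp
        ring
      rw [this]
      positivity
  have h := hmono (Set.self_mem_Ici) (Set.mem_Ici.2 ht) ht
  simp only [Real.log_one] at h
  norm_num at h
  linarith

lemma log_div_le_sqrt (a b : ℝ) (hb : 0 < b) (hab : b ≤ a) :
    Real.log (a / b) ≤ (a - b) / Real.sqrt (a * b) := by
  have ha : (0:ℝ) < a := lt_of_lt_of_le hb hab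
  have hsb : (0:ℝ) < Real.sqrt b := Real.sqrt_pos.2 hb
  have hsa : (0:ℝ) < Real.sqrt a := Real.sqrt_pos.2 ha
  have ht : 1 ≤ Real.sqrt a / Real.sqrt b := by
    rw [le_div_iff₀ hsb, one_mul]
    exact Real.sqrt_le_sqrt hab
  have h := two_log_le _ ht
  have hlog : 2 * Real.log (Real.sqrt a / Real.sqrt b) = Real.log (a / b) := by
    rw [Real.log_div hsa.ne' hsb.ne', Real.log_sqrt ha.le, Real.log_sqrt hb.le,
      Real.log_div ha.ne' hb.ne']
    ring
  have hrhs : Real.sqrt a / Real.sqrt b - (Real.sqrt a / Real.sqrt b)⁻¹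
      = (a - b) / Real.sqrt (a * b) := by
    have h2a : Real.sqrt a * Real.sqrt a = a := Real.mul_self_sqrt ha.le
    have h2b : Real.sqrt b * Real.sqrt b = b := Real.mul_self_sqrt hb.le
    rw [Real.sqrt_mul ha.le, inv_div, div_sub_div _ _ hsb.ne' hsa.ne', h2a, h2b, mul_comm]
  rw [hlog, hrhs] at h
  exact h

/-- KL divergence between Bernoulli(a) and Bernoulli(b). -/
noncomputable def bernKL (a b : ℝ) : ℝ :=
  a * Real.log (a / b) + (1 - a) * Real.log ((1 - a) / (1 - b))

theorem stmt0 (p q : ℝ) (hp : p ∈ Set.Ico (1/2 : ℝ) 1) (hq : q ∈ Set.Ico (1/2 : ℝ) 1)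
    (hpq : q < p) : bernKL p q ≤ bernKL q p := by
  obtain ⟨hp2, hp1⟩ := hp
  obtain ⟨hq2, hq1⟩ := hq
  have hq0 : (0:ℝ) < q := by linarith
  have hq1' : q < 1 := by linarith
  set G : ℝ → ℝ := fun x => q * (Real.log q - Real.log x)
      + (1 - q) * (Real.log (1 - q) - Real.log (1 - x))
      - (x * (Real.log x - Real.log q) + (1 - x) * (Real.log (1 - x) - Real.log (1 - q)))
    with hG
  -- derivative of G
  have hd : ∀ x : ℝ, 0 < x → x < 1 →
      HasDerivAt G ((1 - q) * (1 - x)⁻¹ - q * x⁻¹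
        - (Real.log x - Real.log q) - (Real.log (1 - q) - Real.log (1 - x))) x := by
    intro x hx0 hx1
    have h1x : (0:ℝ) < 1 - x := by linarith
    have hlx : HasDerivAt (fun x : ℝ => Real.log x) x⁻¹ x := Real.hasDerivAt_log hx0.ne'
    have hl1x : HasDerivAt (fun x : ℝ => Real.log (1 - x)) (-(1 - x)⁻¹) x := by
      have := (Real.hasDerivAt_log h1x.ne').comp x
        ((hasDerivAt_const x (1:ℝ)).sub (hasDerivAt_id x))
      refine this.congr_deriv ?_
      ring
    have t1 : HasDerivAt (fun x : ℝ => q * (Real.log q - Real.log x)) (q * (0 - x⁻¹)) x :=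
      ((hasDerivAt_const x (Real.log q)).sub hlx).const_mul q
    have t2 : HasDerivAt (fun x : ℝ => (1 - q) * (Real.log (1 - q) - Real.log (1 - x)))
        ((1 - q) * (0 - -(1 - x)⁻¹)) x :=
      ((hasDerivAt_const x (Real.log (1 - q))).sub hl1x).const_mul (1 - q)
    have t3 : HasDerivAt (fun x : ℝ => x * (Real.log x - Real.log q))
        (1 * (Real.log x - Real.log q) + x * (x⁻¹ - 0)) x :=
      (hasDerivAt_id x).mul (hlx.sub (hasDerivAt_const x (Real.log q)))
    have t4 : HasDerivAt (fun x : ℝ => (1 - x) * (Real.log (1 - x) - Real.log (1 - q)))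
        ((0 - 1) * (Real.log (1 - x) - Real.log (1 - q)) + (1 - x) * (-(1 - x)⁻¹ - 0)) x :=
      ((hasDerivAt_const x (1:ℝ)).sub (hasDerivAt_id x)).mul
        (hl1x.sub (hasDerivAt_const x (Real.log (1 - q))))
    have := (t1.add t2).sub (t3.add t4)
    refine this.congr_deriv ?_
    have hxne : x ≠ 0 := hx0.ne'
    have h1xne : (1:ℝ) - x ≠ 0 := h1x.ne'
    field_simp
    ring
  -- monotonicity of G on [q, p]
  have hmono : MonotoneOn G (Set.Icc q p) := by
    apply monotoneOn_of_deriv_nonneg (convex_Icc q p)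
    · intro x hx
      have hx0 : (0:ℝ) < x := lt_of_lt_of_le hq0 hx.1
      have hx1 : x < 1 := lt_of_le_of_lt hx.2 hp1
      exact (hd x hx0 hx1).continuousAt.continuousWithinAt
    · intro x hx
      rw [interior_Icc] at hx
      have hx0 : (0:ℝ) < x := lt_trans hq0 hx.1
      have hx1 : x < 1 := lt_trans hx.2 hp1
      exact (hd x hx0 hx1).differentiableAt.differentiableWithinAt
    · intro x hx
      rw [interior_Icc] at hx
      have hx0 : (0:ℝ) < x := lt_trans hq0 hx.1
      have hx1 : x < 1 := lt_trans hx.2 hp1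
      have h1x : (0:ℝ) < 1 - x := by linarith
      have h1q : (0:ℝ) < 1 - q := by linarith
      have hqx : q < x := hx.1
      rw [(hd x hx0 hx1).deriv]
      -- key inequality
      have hb : (0:ℝ) < q * (1 - x) := by positivity
      have hab : q * (1 - x) ≤ x * (1 - q) := by nlinarith
      have hkey := log_div_le_sqrt (x * (1 - q)) (q * (1 - x)) hb hab
      have hlogeq : Real.log (x * (1 - q) / (q * (1 - x)))
          = (Real.log x - Real.log q) + (Real.log (1 - q) - Real.log (1 - x)) := by
        rw [Real.log_div (by positivity) (by positivity), Real.log_mul hx0.ne' h1q.ne',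
          Real.log_mul hq0.ne' h1x.ne']
        ring
      have hsqrt : x * (1 - x) ≤ Real.sqrt (x * (1 - q) * (q * (1 - x))) := by
        rw [show x * (1 - q) * (q * (1 - x)) = (x * (1-x)) * (q * (1-q)) by ring]
        have hxq : x * (1 - x) ≤ q * (1 - q) := by
          nlinarith [mul_nonneg (by linarith : (0:ℝ) ≤ x - q) (by linarith : (0:ℝ) ≤ x + q - 1)]
        have h1 : (x * (1 - x)) * (x * (1 - x)) ≤ (x * (1-x)) * (q * (1-q)) :=
          mul_le_mul_of_nonneg_left hxq (by positivity)
        nlinarith [Real.sq_sqrt (show (0:ℝ) ≤ (x * (1-x)) * (q * (1-q)) by positivity),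
          Real.sqrt_nonneg ((x * (1-x)) * (q * (1-q))), sq_nonneg (Real.sqrt ((x * (1-x)) * (q * (1-q))) - x * (1-x))]
      have hfrac : (x * (1 - q) - q * (1 - x)) / Real.sqrt (x * (1 - q) * (q * (1 - x)))
          ≤ (x * (1 - q) - q * (1 - x)) / (x * (1 - x)) := by
        apply div_le_div_of_nonneg_left (by nlinarith) (by positivity) hsqrt
      have heq2 : (x * (1 - q) - q * (1 - x)) / (x * (1 - x))
          = (1 - q) * (1 - x)⁻¹ - q * x⁻¹ := by
        field_simp
      rw [hlogeq] at hkey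
      linarith [hkey.trans (hfrac.trans_eq heq2)]
  have h0 : G q = 0 := by simp [hG]
  have hGp : (0:ℝ) ≤ G p := by
    have := hmono (Set.mem_Icc.2 ⟨le_refl q, hpq.le⟩) (Set.mem_Icc.2 ⟨hpq.le, le_refl p⟩) hpq.le
    linarith [h0 ▸ this]
  have hfin : bernKL q p - bernKL p q = G p := by
    simp only [bernKL, hG]
    rw [Real.log_div hq0.ne' (by linarith : (0:ℝ) < p).ne',
      Real.log_div (by linarith : (0:ℝ) < 1 - q).ne' (by linarith : (0:ℝ) < 1 - p).ne',
      Real.log_div (by linarith : (0:ℝ) < p).ne' hq0.ne',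
      Real.log_div (by linarith : (0:ℝ) < 1 - p).ne' (by linarith : (0:ℝ) < 1 - q).ne']
    try ring
  linarith
end

section
/- Let γ ∈ (0,1), P* ∈ ℝ^{S×S} row-stochastic, ρ a probability vector over S, d*ᵀ = (1−γ)ρᵀ(I−γP*)⁻¹, and V̂, b* ∈ ℝ^S with 0 ≤ V̂ ≤ (1/(1−γ))·1, b* ≥ 0, and V̂ − γP*V̂ + 2b* ≥ 0. Then Σ_s d*(s)·Var_{P*_{s,·}}(V̂) ≤ 2/(γ²(1−γ)) + (4/(γ²(1−γ)))·⟨d*, b*⟩, where Var_{P*_{s,·}}(V̂) is the variance of V̂ under the s-th row of P*. -/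
open Matrix Finset

lemma aux_unit {S : Type*} [Fintype S] [DecidableEq S]
    (γ : ℝ) (hγ0 : 0 < γ) (hγ1 : γ < 1)
    (P : Matrix S S ℝ) (hP0 : ∀ s s', 0 ≤ P s s') (hP1 : ∀ s, ∑ s', P s s' = 1) :
    IsUnit ((1 : Matrix S S ℝ) - γ • P).det := by
  rw [← Matrix.isUnit_iff_isUnit_det, ← Matrix.mulVec_injective_iff_isUnit]
  intro x y hxy
  have hv : ((1 : Matrix S S ℝ) - γ • P) *ᵥ (x - y) = 0 := by
    rw [Matrix.mulVec_sub, hxy, sub_self]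
  set v : S → ℝ := x - y with hvdef
  have heq : ∀ s, v s = γ * ∑ s', P s s' * v s' := by
    intro s
    have h := congrFun hv s
    simp only [Matrix.sub_mulVec, Matrix.smul_mulVec, Matrix.one_mulVec,
      Pi.sub_apply, Pi.smul_apply, Pi.zero_apply, smul_eq_mul] at h
    have hmv : (P *ᵥ v) s = ∑ s', P s s' * v s' := rfl
    rw [hmv] at h
    linarith
  have hv0 : v = 0 := by
    rcases isEmpty_or_nonempty S with hS | hS
    · funext s; exact absurd trivial (hS.false s).elim
    · obtain ⟨s₀, -, hs₀⟩ := Finset.exists_max_image Finset.univ (fun s => |v s|)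
        Finset.univ_nonempty
      have hbound : |v s₀| ≤ γ * |v s₀| := by
        calc |v s₀| = γ * |∑ s', P s₀ s' * v s'| := by
              rw [heq s₀, abs_mul, abs_of_pos hγ0]
          _ ≤ γ * ∑ s', |P s₀ s' * v s'| :=
              mul_le_mul_of_nonneg_left (Finset.abs_sum_le_sum_abs _ _) hγ0.le
          _ ≤ γ * ∑ s', P s₀ s' * |v s₀| := by
              apply mul_le_mul_of_nonneg_left _ hγ0.le
              apply Finset.sum_le_sum
              intro s' _
              rw [abs_mul, abs_of_nonneg (hP0 s₀ s')]
              exact mul_le_mul_of_nonneg_left (hs₀ s' (Finset.mem_univ s')) (hP0 s₀ s')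
          _ = γ * |v s₀| := by rw [← Finset.sum_mul, hP1, one_mul]
      have h0 : |v s₀| = 0 := by nlinarith [abs_nonneg (v s₀)]
      funext s
      have := hs₀ s (Finset.mem_univ s)
      rw [h0] at this
      exact abs_nonpos_iff.mp this
  rw [← sub_eq_zero]
  exact hv0

lemma aux_row {S : Type*} [Fintype S] [DecidableEq S]
    (γ : ℝ) (P : Matrix S S ℝ)
    (hdet : IsUnit ((1 : Matrix S S ℝ) - γ • P).det)
    (ρ dstar : S → ℝ)
    (hd : dstar = (1 - γ) • Matrix.vecMul ρ ((1 : Matrix S S ℝ) - γ • P)⁻¹) :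
    ∀ s, dstar s - γ * ∑ s', dstar s' * P s' s = (1 - γ) * ρ s := by
  have h1 : Matrix.vecMul dstar ((1 : Matrix S S ℝ) - γ • P) = (1 - γ) • ρ := by
    rw [hd, Matrix.smul_vecMul, Matrix.vecMul_vecMul, Matrix.nonsing_inv_mul _ hdet,
      Matrix.vecMul_one]
  intro s
  have h2 := congrFun h1 s
  simp only [Matrix.vecMul, dotProduct, Matrix.sub_apply, Matrix.smul_apply,
    Matrix.one_apply, smul_eq_mul, Pi.smul_apply, mul_sub, Finset.sum_sub_distrib,
    mul_ite, mul_one, mul_zero] at h2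
  rw [Finset.sum_ite_eq' Finset.univ s dstar] at h2
  simp only [Finset.mem_univ, if_true] at h2
  rw [← h2]
  congr 1
  rw [Finset.mul_sum]
  apply Finset.sum_congr rfl
  intro x _
  ring

lemma aux_eq {S : Type*} [Fintype S] [DecidableEq S]
    (γ : ℝ) (P : Matrix S S ℝ) (ρ dstar : S → ℝ)
    (hrow : ∀ s, dstar s - γ * ∑ s', dstar s' * P s' s = (1 - γ) * ρ s)
    (V : S → ℝ) :
    ∑ s, dstar s * (V s - γ * ∑ s', P s s' * V s') = (1 - γ) * ∑ s, ρ s * V s := by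
  have lhs : ∑ s, dstar s * (V s - γ * ∑ s', P s s' * V s')
      = ∑ s, dstar s * V s - ∑ s, ∑ s', γ * (dstar s * (P s s' * V s')) := by
    rw [← Finset.sum_sub_distrib]
    apply Finset.sum_congr rfl
    intro s _
    rw [mul_sub]
    congr 1
    rw [Finset.mul_sum, Finset.mul_sum]
    apply Finset.sum_congr rfl
    intro s' _
    ring
  rw [lhs, Finset.sum_comm, Finset.mul_sum, ← Finset.sum_sub_distrib]
  apply Finset.sum_congr rfl
  intro s _
  have h := hrow s
  have h2 : ∑ s', γ * (dstar s' * (P s' s * V s)) = (γ * ∑ s', dstar s' * P s' s) * V s := by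
    rw [Finset.mul_sum, Finset.sum_mul]
    apply Finset.sum_congr rfl
    intro s' _
    ring
  rw [h2]
  linear_combination (V s) * h

lemma aux_nonneg {S : Type*} [Fintype S] [DecidableEq S]
    (γ : ℝ) (hγ0 : 0 < γ) (hγ1 : γ < 1)
    (P : Matrix S S ℝ) (hP0 : ∀ s s', 0 ≤ P s s') (hP1 : ∀ s, ∑ s', P s s' = 1)
    (ρ dstar : S → ℝ) (hρ0 : ∀ s, 0 ≤ ρ s)
    (hrow : ∀ s, dstar s - γ * ∑ s', dstar s' * P s' s = (1 - γ) * ρ s) :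
    ∀ s, 0 ≤ dstar s := by
  set f : S → ℝ := fun s => min (dstar s) 0 with hf
  have hf0 : ∀ s, f s ≤ 0 := fun s => min_le_right _ _
  have hfd : ∀ s, f s ≤ dstar s := fun s => min_le_left _ _
  have step : ∀ s, γ * ∑ s', f s' * P s' s ≤ f s := by
    intro s
    have h1 : γ * ∑ s', f s' * P s' s ≤ γ * ∑ s', dstar s' * P s' s := by
      apply mul_le_mul_of_nonneg_left _ hγ0.le
      exact Finset.sum_le_sum fun s' _ => mul_le_mul_of_nonneg_right (hfd s') (hP0 s' s)
    have h2 : γ * ∑ s', f s' * P s' s ≤ 0 := by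
      apply mul_nonpos_of_nonneg_of_nonpos hγ0.le
      exact Finset.sum_nonpos fun s' _ => mul_nonpos_of_nonpos_of_nonneg (hf0 s') (hP0 s' s)
    have h3 : γ * ∑ s', dstar s' * P s' s ≤ dstar s := by
      have h := hrow s
      nlinarith [mul_nonneg (by linarith : (0:ℝ) ≤ 1 - γ) (hρ0 s)]
    exact le_min (le_trans h1 h3) h2
  have hsum : γ * ∑ s, f s ≤ ∑ s, f s := by
    have e1 : γ * ∑ s, f s = ∑ s, γ * ∑ s', f s' * P s' s := by
      calc γ * ∑ s, f s = ∑ s', γ * (f s' * ∑ s, P s' s) := by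
            rw [Finset.mul_sum]
            exact Finset.sum_congr rfl fun s' _ => by rw [hP1 s', mul_one]
        _ = ∑ s', ∑ s, γ * (f s' * P s' s) := by
            apply Finset.sum_congr rfl
            intro s' _
            rw [Finset.mul_sum, Finset.mul_sum]
        _ = ∑ s, ∑ s', γ * (f s' * P s' s) := Finset.sum_comm
        _ = ∑ s, γ * ∑ s', f s' * P s' s := by
            apply Finset.sum_congr rfl
            intro s _
            rw [Finset.mul_sum]
    rw [e1]
    exact Finset.sum_le_sum fun s _ => step s
  have hle0 : ∑ s, f s ≤ 0 := Finset.sum_nonpos fun s _ => hf0 s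
  have hzero : ∑ s, f s = 0 := by nlinarith
  intro s
  have := (Finset.sum_eq_zero_iff_of_nonpos (fun s _ => hf0 s)).mp hzero s (Finset.mem_univ s)
  have h5 : min (dstar s) 0 = 0 := this
  rw [min_eq_right_iff] at h5
  exact h5

/-- Variance of a vector `V` with respect to a probability vector `q`. -/
noncomputable def Var {S : Type*} [Fintype S] (q V : S → ℝ) : ℝ :=
  (∑ s, q s * (V s)^2) - (∑ s, q s * V s)^2

theorem stmt8 {S : Type*} [Fintype S] [DecidableEq S]
    (γ : ℝ) (hγ0 : 0 < γ) (hγ1 : γ < 1)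
    (P : Matrix S S ℝ) (hP0 : ∀ s s', 0 ≤ P s s') (hP1 : ∀ s, ∑ s', P s s' = 1)
    (ρ : S → ℝ) (hρ0 : ∀ s, 0 ≤ ρ s) (hρ1 : ∑ s, ρ s = 1)
    (dstar : S → ℝ)
    (hd : dstar = (1 - γ) • Matrix.vecMul ρ ((1 : Matrix S S ℝ) - γ • P)⁻¹)
    (Vhat bstar : S → ℝ)
    (hV0 : ∀ s, 0 ≤ Vhat s) (hV1 : ∀ s, Vhat s ≤ 1/(1-γ))
    (hb : ∀ s, 0 ≤ bstar s)
    (hpos : ∀ s, 0 ≤ Vhat s - γ * ∑ s', P s s' * Vhat s' + 2 * bstar s) :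
    ∑ s, dstar s * Var (P s) Vhat
      ≤ 2 / (γ^2 * (1-γ)) + (4 / (γ^2 * (1-γ))) * ∑ s, dstar s * bstar s := by
  have hγ1' : (0:ℝ) < 1 - γ := by linarith
  have hrow := aux_row γ P (aux_unit γ hγ0 hγ1 P hP0 hP1) ρ dstar hd
  have hds := aux_nonneg γ hγ0 hγ1 P hP0 hP1 ρ dstar hρ0 hrow
  set W : S → ℝ := fun s => ∑ s', P s s' * Vhat s' with hW
  set W2 : S → ℝ := fun s => ∑ s', P s s' * (Vhat s')^2 with hW2
  set A : S → ℝ := fun s => Vhat s - γ * W s with hA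
  have hVar : ∀ s, Var (P s) Vhat = W2 s - (W s)^2 := fun s => rfl
  have hW2nn : ∀ s, 0 ≤ W2 s := fun s =>
    Finset.sum_nonneg fun s' _ => mul_nonneg (hP0 s s') (sq_nonneg _)
  have hAb : ∀ s, 0 ≤ A s + 2 * bstar s := fun s => hpos s
  -- split identity
  have hsplit : γ^2 * ∑ s, dstar s * Var (P s) Vhat
      = (∑ s, dstar s * (γ^2 * W2 s - (Vhat s)^2))
        + 2 * (∑ s, dstar s * (Vhat s * A s)) - ∑ s, dstar s * (A s)^2 := by
    rw [Finset.mul_sum, Finset.mul_sum, ← Finset.sum_add_distrib, ← Finset.sum_sub_distrib]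
    apply Finset.sum_congr rfl
    intro s _
    rw [hVar s]
    simp only [hA]
    ring
  -- Bound 1
  have hB1 : ∑ s, dstar s * (γ^2 * W2 s - (Vhat s)^2) ≤ 0 := by
    have step1 : ∑ s, dstar s * (γ^2 * W2 s - (Vhat s)^2)
        ≤ ∑ s, dstar s * (γ * W2 s - (Vhat s)^2) := by
      apply Finset.sum_le_sum
      intro s _
      apply mul_le_mul_of_nonneg_left _ (hds s)
      have : γ^2 * W2 s ≤ γ * W2 s := by nlinarith [mul_nonneg (mul_nonneg hγ0.le (by linarith : (0:ℝ) ≤ 1 - γ)) (hW2nn s)]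
      linarith
    have step2 : ∑ s, dstar s * (γ * W2 s - (Vhat s)^2)
        = -((1-γ) * ∑ s, ρ s * (Vhat s)^2) := by
      rw [← aux_eq γ P ρ dstar hrow (fun s => (Vhat s)^2), ← Finset.sum_neg_distrib]
      apply Finset.sum_congr rfl
      intro s _
      simp only [hW2]
      ring
    have step3 : 0 ≤ (1-γ) * ∑ s, ρ s * (Vhat s)^2 := by
      apply mul_nonneg hγ1'.le
      exact Finset.sum_nonneg fun s _ => mul_nonneg (hρ0 s) (sq_nonneg _)
    linarith
  -- Bound on ∑ dstar * A
  have hdA : ∑ s, dstar s * A s ≤ 1 := by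
    have e : ∑ s, dstar s * A s = (1-γ) * ∑ s, ρ s * Vhat s := by
      rw [← aux_eq γ P ρ dstar hrow Vhat]
    have hsum : ∑ s, ρ s * Vhat s ≤ 1/(1-γ) := by
      calc ∑ s, ρ s * Vhat s ≤ ∑ s, ρ s * (1/(1-γ)) :=
            Finset.sum_le_sum fun s _ => mul_le_mul_of_nonneg_left (hV1 s) (hρ0 s)
        _ = 1/(1-γ) := by rw [← Finset.sum_mul, hρ1, one_mul]
    rw [e]
    calc (1-γ) * ∑ s, ρ s * Vhat s ≤ (1-γ) * (1/(1-γ)) :=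
          mul_le_mul_of_nonneg_left hsum hγ1'.le
      _ = 1 := by field_simp
  -- Bound 2
  have hB2 : ∑ s, dstar s * (Vhat s * A s)
      ≤ (1/(1-γ)) * (1 + 2 * ∑ s, dstar s * bstar s) := by
    have pt : ∀ s, Vhat s * A s ≤ (1/(1-γ)) * (A s + 2 * bstar s) := by
      intro s
      have h1 : Vhat s * (A s + 2 * bstar s) ≤ (1/(1-γ)) * (A s + 2 * bstar s) :=
        mul_le_mul_of_nonneg_right (hV1 s) (hAb s)
      nlinarith [mul_nonneg (hV0 s) (hb s)]
    calc ∑ s, dstar s * (Vhat s * A s)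
        ≤ ∑ s, dstar s * ((1/(1-γ)) * (A s + 2 * bstar s)) :=
          Finset.sum_le_sum fun s _ => mul_le_mul_of_nonneg_left (pt s) (hds s)
      _ = (1/(1-γ)) * (∑ s, dstar s * A s + 2 * ∑ s, dstar s * bstar s) := by
          rw [Finset.mul_sum, mul_add, Finset.mul_sum, Finset.mul_sum, ← Finset.sum_add_distrib]
          apply Finset.sum_congr rfl
          intro s _
          ring
      _ ≤ (1/(1-γ)) * (1 + 2 * ∑ s, dstar s * bstar s) := by
          apply mul_le_mul_of_nonneg_left _ (by positivity)
          linarith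
  -- Bound 3
  have hB3 : 0 ≤ ∑ s, dstar s * (A s)^2 :=
    Finset.sum_nonneg fun s _ => mul_nonneg (hds s) (sq_nonneg _)
  -- combine
  have hfin : γ^2 * ∑ s, dstar s * Var (P s) Vhat
      ≤ 2/(1-γ) + (4/(1-γ)) * ∑ s, dstar s * bstar s := by
    rw [hsplit]
    have h2 : 2 * (∑ s, dstar s * (Vhat s * A s))
        ≤ 2/(1-γ) + (4/(1-γ)) * ∑ s, dstar s * bstar s := by
      have e : 2/(1-γ) + (4/(1-γ)) * ∑ s, dstar s * bstar s
          = 2 * ((1/(1-γ)) * (1 + 2 * ∑ s, dstar s * bstar s)) := by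
        field_simp
        ring
      rw [e]
      linarith
    linarith
  have hγ2 : (0:ℝ) < γ^2 := by positivity
  calc ∑ s, dstar s * Var (P s) Vhat
      = (γ^2 * ∑ s, dstar s * Var (P s) Vhat) / γ^2 := by field_simp
    _ ≤ (2/(1-γ) + (4/(1-γ)) * ∑ s, dstar s * bstar s) / γ^2 := by gcongr
    _ = 2 / (γ^2 * (1-γ)) + (4 / (γ^2 * (1-γ))) * ∑ s, dstar s * bstar s := by
        rw [div_eq_iff (ne_of_gt hγ2)]
        field_simp
end

section
/- Let H ≥ 1, P_h* ∈ ℝ^{S×S} row-stochastic, d_h* ∈ Δ(S) with (d_h*)ᵀP_h* = (d_{h+1}*)ᵀ, and V̂_h ∈ ℝ^S with 0 ≤ V̂_h ≤ H·1 for h = 1,…,H+1, V̂_{H+1} = 0. Suppose b_h* ≥ 0 and V̂_h + 2b_h* − P_h* V̂_{h+1} ≥ 0 entrywise for all h. Then for every h ∈ [H]: Σ_{j=h}^{H} Σ_s d_j*(s)·Var_{P_{j,s,·}*}(V̂_{j+1}) ≤ 3H² + 4H·Σ_{j=h}^{H} ⟨d_j*, b_j*⟩. -/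
theorem stmt10 {S : Type*} [Fintype S] (H : ℕ) (hH : 1 ≤ H)
    (P : ℕ → S → S → ℝ) (d : ℕ → S → ℝ) (b : ℕ → S → ℝ) (V : ℕ → S → ℝ)
    (hP0 : ∀ h, 1 ≤ h → h ≤ H → ∀ s s', 0 ≤ P h s s')
    (hP1 : ∀ h, 1 ≤ h → h ≤ H → ∀ s, ∑ s', P h s s' = 1)
    (hd0 : ∀ h, 1 ≤ h → h ≤ H + 1 → ∀ s, 0 ≤ d h s)
    (hd1 : ∀ h, 1 ≤ h → h ≤ H + 1 → ∑ s, d h s = 1)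
    (hflow : ∀ h, 1 ≤ h → h ≤ H → ∀ s', ∑ s, d h s * P h s s' = d (h+1) s')
    (hV0 : ∀ h s, 1 ≤ h → h ≤ H + 1 → 0 ≤ V h s)
    (hV1 : ∀ h s, 1 ≤ h → h ≤ H + 1 → V h s ≤ (H : ℝ))
    (hVend : ∀ s, V (H+1) s = 0)
    (hb : ∀ h s, 0 ≤ b h s)
    (hpos : ∀ h, 1 ≤ h → h ≤ H → ∀ s,
      0 ≤ V h s + 2 * b h s - ∑ s', P h s s' * V (h+1) s') :
    ∀ h, 1 ≤ h → h ≤ H →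
      ∑ j ∈ Finset.Icc h H, ∑ s, d j s * Var (P j s) (V (j+1))
        ≤ 3 * (H : ℝ)^2 + 4 * (H : ℝ) * ∑ j ∈ Finset.Icc h H, ∑ s, d j s * b j s := by
  have gen : ∀ j, 1 ≤ j → j ≤ H → ∀ f : S → ℝ,
      ∑ s, d j s * ∑ s', P j s s' * f s' = ∑ s', d (j+1) s' * f s' := by
    intro j hj1 hj2 f
    calc ∑ s, d j s * ∑ s', P j s s' * f s'
        = ∑ s', (∑ s, d j s * P j s s') * f s' := by
          simp_rw [Finset.mul_sum, Finset.sum_mul, mul_assoc]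
          exact Finset.sum_comm
      _ = ∑ s', d (j+1) s' * f s' :=
          Finset.sum_congr rfl fun s' _ => by rw [hflow j hj1 hj2 s']
  have key : ∀ j, 1 ≤ j → j ≤ H →
      (∑ s, d j s * Var (P j s) (V (j+1))) + ∑ s, d j s * (V j s)^2
        ≤ (∑ s, d (j+1) s * (V (j+1) s)^2)
          + 2*(H:ℝ)*((∑ s, d j s * V j s) - ∑ s, d (j+1) s * V (j+1) s)
          + 4*(H:ℝ)*∑ s, d j s * b j s := by
    intro j hj1 hj2
    have hsq : ∑ s, d j s * ∑ s', P j s s' * (V (j+1) s')^2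
        = ∑ s', d (j+1) s' * (V (j+1) s')^2 := gen j hj1 hj2 _
    have hlin : ∑ s, d j s * ∑ s', P j s s' * V (j+1) s'
        = ∑ s', d (j+1) s' * V (j+1) s' := gen j hj1 hj2 _
    have hvar : ∑ s, d j s * Var (P j s) (V (j+1))
        = (∑ s, d (j+1) s * (V (j+1) s)^2)
          - ∑ s, d j s * (∑ s', P j s s' * V (j+1) s')^2 := by
      rw [← hsq]
      simp_rw [Var, mul_sub]
      rw [Finset.sum_sub_distrib]
    rw [hvar, ← hlin]
    have pointwise : ∀ s, d j s * ((V j s)^2 - (∑ s', P j s s' * V (j+1) s')^2)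
        ≤ d j s * (2*(H:ℝ)*(V j s - ∑ s', P j s s' * V (j+1) s') + 4*(H:ℝ)*b j s) := by
      intro s
      have hPV0 : 0 ≤ ∑ s', P j s s' * V (j+1) s' :=
        Finset.sum_nonneg fun s' _ =>
          mul_nonneg (hP0 j hj1 hj2 s s') (hV0 (j+1) s' (by omega) (by omega))
      have hPVH : ∑ s', P j s s' * V (j+1) s' ≤ (H:ℝ) := by
        calc ∑ s', P j s s' * V (j+1) s' ≤ ∑ s', P j s s' * (H:ℝ) :=
              Finset.sum_le_sum fun s' _ =>
                mul_le_mul_of_nonneg_left (hV1 (j+1) s' (by omega) (by omega))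
                  (hP0 j hj1 hj2 s s')
          _ = (H:ℝ) := by rw [← Finset.sum_mul, hP1 j hj1 hj2 s, one_mul]
      have hx := hpos j hj1 hj2 s
      have hVj0 := hV0 j s hj1 (by omega)
      have hVjH := hV1 j s hj1 (by omega)
      have hb' := hb j s
      have hd := hd0 j hj1 (by omega) s
      apply mul_le_mul_of_nonneg_left _ hd
      nlinarith [mul_nonneg hx
          (show (0:ℝ) ≤ 2*(H:ℝ) - (V j s + ∑ s', P j s s' * V (j+1) s') by linarith),
        mul_nonneg hb'
          (show (0:ℝ) ≤ V j s + ∑ s', P j s s' * V (j+1) s' by linarith)]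
    have hsum : ∑ s, d j s * ((V j s)^2 - (∑ s', P j s s' * V (j+1) s')^2)
        ≤ ∑ s, d j s * (2*(H:ℝ)*(V j s - ∑ s', P j s s' * V (j+1) s') + 4*(H:ℝ)*b j s) :=
      Finset.sum_le_sum (fun s _ => pointwise s)
    have e1 : ∑ s, d j s * ((V j s)^2 - (∑ s', P j s s' * V (j+1) s')^2)
        = ∑ s, d j s * (V j s)^2 - ∑ s, d j s * (∑ s', P j s s' * V (j+1) s')^2 := by
      simp_rw [mul_sub]; rw [Finset.sum_sub_distrib]
    have e2 : ∑ s, d j s * (2*(H:ℝ)*(V j s - ∑ s', P j s s' * V (j+1) s') + 4*(H:ℝ)*b j s)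
        = 2*(H:ℝ)*((∑ s, d j s * V j s) - ∑ s, d j s * ∑ s', P j s s' * V (j+1) s')
          + 4*(H:ℝ)*∑ s, d j s * b j s := by
      rw [mul_sub, Finset.mul_sum, Finset.mul_sum, Finset.mul_sum, ← Finset.sum_sub_distrib,
        ← Finset.sum_add_distrib]
      exact Finset.sum_congr rfl fun s _ => by ring
    rw [e1, e2] at hsum
    linarith
  have main : ∀ m, m ≤ H →
      (∑ j ∈ Finset.Icc (H+1-m) H, ∑ s, d j s * Var (P j s) (V (j+1)))
        + ∑ s, d (H+1-m) s * (V (H+1-m) s)^2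
      ≤ 2*(H:ℝ)*(∑ s, d (H+1-m) s * V (H+1-m) s)
        + 4*(H:ℝ)*∑ j ∈ Finset.Icc (H+1-m) H, ∑ s, d j s * b j s := by
    intro m
    induction m with
    | zero =>
      intro _
      simp [Finset.Icc_eq_empty_of_lt (Nat.lt_succ_self H), hVend]
    | succ m ih =>
      intro hm
      have ih' := ih (by omega)
      have h1 : H + 1 - (m+1) = H - m := by omega
      have h2 : H - m + 1 = H + 1 - m := by omega
      have hk := key (H - m) (by omega) (by omega)
      rw [h1]
      have hsplit : ∀ (f : ℕ → ℝ),
          ∑ j ∈ Finset.Icc (H - m) H, f j = f (H-m) + ∑ j ∈ Finset.Icc (H-m+1) H, f j := by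
        intro f
        rw [← Finset.Ico_add_one_right_eq_Icc,
          Finset.sum_eq_sum_Ico_succ_bot (by omega : H - m < H + 1), Finset.Ico_add_one_right_eq_Icc]
      rw [hsplit, hsplit]
      rw [← h2] at ih'
      linarith [ih', hk]
  intro h hh1 hh2
  have hm : H + 1 - (H + 1 - h) = h := by omega
  have hmain := main (H + 1 - h) (by omega)
  rw [hm] at hmain
  have hdV : ∑ s, d h s * V h s ≤ (H:ℝ) := by
    calc ∑ s, d h s * V h s ≤ ∑ s, d h s * (H:ℝ) :=
          Finset.sum_le_sum fun s _ =>
            mul_le_mul_of_nonneg_left (hV1 h s hh1 (by omega)) (hd0 h hh1 (by omega) s)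
      _ = (H:ℝ) := by rw [← Finset.sum_mul, hd1 h hh1 (by omega), one_mul]
  have hdV2 : 0 ≤ ∑ s, d h s * (V h s)^2 :=
    Finset.sum_nonneg fun s _ =>
      mul_nonneg (hd0 h hh1 (by omega) s) (sq_nonneg _)
  have hH' : (1:ℝ) ≤ (H:ℝ) := by exact_mod_cast hH
  nlinarith [hmain, hdV, hdV2, sq_nonneg ((H:ℝ))]
end

section
/- For any probability vector d* over a finite set S with Σ_s d*(s) = 1, one has Σ_s d*(s)/√(min{d*(s), 1/S}) ≤ 2√S, where S = |S|. -/
theorem stmt11 {S : Type*} [Fintype S] (d : S → ℝ)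
    (hd0 : ∀ s, 0 ≤ d s) (hd1 : ∑ s, d s = 1) :
    ∑ s, d s / Real.sqrt (min (d s) (1 / (Fintype.card S : ℝ)))
      ≤ 2 * Real.sqrt (Fintype.card S) := by
  have hne : Nonempty S := by
    by_contra h
    rw [not_nonempty_iff] at h
    simp [Finset.univ_eq_empty] at hd1
  have hcard : (0:ℝ) < (Fintype.card S : ℝ) := by
    exact_mod_cast Fintype.card_pos
  set n : ℝ := (Fintype.card S : ℝ)
  have hsqn : 0 < Real.sqrt n := Real.sqrt_pos.mpr hcard
  have hpt : ∀ s, d s / Real.sqrt (min (d s) (1 / n))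
      ≤ Real.sqrt (d s) + d s * Real.sqrt n := by
    intro s
    rcases le_total (d s) (1 / n) with h | h
    · rw [min_eq_left h, Real.div_sqrt]
      nlinarith [hd0 s, hsqn.le, Real.sqrt_nonneg (d s)]
    · rw [min_eq_right h, one_div, Real.sqrt_inv, div_inv_eq_mul]
      nlinarith [Real.sqrt_nonneg (d s)]
  calc ∑ s, d s / Real.sqrt (min (d s) (1 / n))
      ≤ ∑ s, (Real.sqrt (d s) + d s * Real.sqrt n) :=
        Finset.sum_le_sum fun s _ => hpt s
    _ = (∑ s, Real.sqrt (d s)) + Real.sqrt n := by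
        rw [Finset.sum_add_distrib, ← Finset.sum_mul, hd1, one_mul]
    _ ≤ Real.sqrt n + Real.sqrt n := by
        gcongr
        have h1 : (∑ s, Real.sqrt (d s)) ^ 2 ≤ n := by
          calc (∑ s, Real.sqrt (d s)) ^ 2
              ≤ (Finset.univ.card : ℝ) * ∑ s, Real.sqrt (d s) ^ 2 :=
                sq_sum_le_card_mul_sum_sq
            _ = n := by
                simp only [Real.sq_sqrt (hd0 _)]
                rw [hd1, mul_one]; rfl
        have h2 : 0 ≤ ∑ s, Real.sqrt (d s) :=
          Finset.sum_nonneg fun s _ => Real.sqrt_nonneg _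
        nlinarith [Real.sq_sqrt hcard.le, Real.sqrt_nonneg n]
    _ = 2 * Real.sqrt n := by ring
end

section
/- Let γ ∈ [1/2, 1) and p = γ + 14(1−γ)²ε/γ, q = γ − 14(1−γ)²ε/γ with 14(1−γ)²ε/γ ≤ (1−γ)/2, and let c ∈ [0, 1/2]. Then KL((1−c)p + c ∥ (1−c)q + c) ≤ 12544·(1−γ)³·ε², where KL denotes the Bernoulli KL divergence. -/
set_option maxHeartbeats 1000000


theorem stmt15 (γ ε c : ℝ) (hγ1 : 1/2 ≤ γ) (hγ2 : γ < 1) (hε : 0 < ε)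
    (hcond : 14 * (1 - γ)^2 * ε / γ ≤ (1 - γ)/2)
    (hc0 : 0 ≤ c) (hc1 : c ≤ 1/2)
    (p q : ℝ) (hp : p = γ + 14 * (1 - γ)^2 * ε / γ) (hq : q = γ - 14 * (1 - γ)^2 * ε / γ) :
    bernKL ((1 - c) * p + c) ((1 - c) * q + c) ≤ 12544 * (1 - γ)^3 * ε^2 := by
  have hγ0 : (0:ℝ) < γ := by linarith
  set d : ℝ := 14 * (1 - γ)^2 * ε / γ with hdef
  have h1γ : (0:ℝ) < 1 - γ := by linarith
  have hd0 : 0 < d := by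
    apply div_pos _ hγ0
    have : (0:ℝ) < (1 - γ)^2 := pow_pos h1γ 2
    nlinarith
  have hdγ : d * γ = 14 * (1 - γ)^2 * ε := by
    rw [hdef]; exact div_mul_cancel₀ _ hγ0.ne'
  have hd2 : d ≤ (1 - γ)/2 := hcond
  set x : ℝ := (1 - c) * p + c with hxdef
  set y : ℝ := (1 - c) * q + c with hydef
  have hc' : (1:ℝ)/2 ≤ 1 - c := by linarith
  have hq0 : 0 < q := by rw [hq]; nlinarith
  have hq1 : q < 1 := by rw [hq]; nlinarith
  have hp1 : p < 1 := by rw [hp]; nlinarith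
  have hp0 : 0 < p := by rw [hp]; nlinarith
  have hy0 : 0 < y := by rw [hydef]; nlinarith
  have h1y : 1 - y = (1 - c) * (1 - q) := by rw [hydef]; ring
  have h1y0 : 0 < 1 - y := by rw [h1y]; nlinarith
  have hx0 : 0 < x := by rw [hxdef]; nlinarith
  have h1x : 1 - x = (1 - c) * (1 - p) := by rw [hxdef]; ring
  have h1x0 : 0 < 1 - x := by rw [h1x]; nlinarith
  have key : bernKL x y ≤ (x - y)^2 / (y * (1 - y)) := by
    unfold bernKL
    have l1 := Real.log_le_sub_one_of_pos (div_pos hx0 hy0)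
    have l2 := Real.log_le_sub_one_of_pos (div_pos h1x0 h1y0)
    have e1 : x * Real.log (x / y) ≤ x * (x / y - 1) :=
      mul_le_mul_of_nonneg_left l1 hx0.le
    have e2 : (1 - x) * Real.log ((1 - x) / (1 - y)) ≤ (1 - x) * ((1 - x) / (1 - y) - 1) :=
      mul_le_mul_of_nonneg_left l2 h1x0.le
    have eq1 : x * (x / y - 1) + (1 - x) * ((1 - x) / (1 - y) - 1)
        = (x - y)^2 / (y * (1 - y)) := by
      field_simp
      ring
    linarith
  have hxy : x - y = (1 - c) * 2 * d := by rw [hxdef, hydef, hp, hq]; ring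
  have hylb : (1 - c) * q * (1 - q) ≤ y * (1 - y) := by
    have hdiff : y * (1 - y) - (1 - c) * q * (1 - q) = c * (1 - c) * (1 - q)^2 := by
      rw [h1y, hydef]; ring
    have hnn : (0:ℝ) ≤ c * (1 - c) * (1 - q)^2 :=
      mul_nonneg (mul_nonneg hc0 (by linarith)) (sq_nonneg (1 - q))
    linarith
  have h16 : (1 - γ) ≤ 16 * (q * (1 - q)) * γ^2 := by
    have hq_lb : (3*γ - 1)/2 ≤ q := by rw [hq]; linarith
    have h1q_lb : 1 - γ ≤ 1 - q := by rw [hq]; linarith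
    have hprod : ((3*γ - 1)/2) * (1 - γ) ≤ q * (1 - q) :=
      mul_le_mul hq_lb h1q_lb h1γ.le (by linarith)
    have hpoly : (0:ℝ) ≤ (2*γ - 1) * (12*γ^2 + 2*γ + 1) * (1 - γ) := by
      have h2γ : (0:ℝ) ≤ 2*γ - 1 := by linarith
      have hquad : (0:ℝ) ≤ 12*γ^2 + 2*γ + 1 := by nlinarith [sq_nonneg γ]
      exact mul_nonneg (mul_nonneg h2γ hquad) h1γ.le
    nlinarith [mul_le_mul_of_nonneg_right hprod (by positivity : (0:ℝ) ≤ 16*γ^2)]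
  have hmain : 4 * d^2 ≤ 12544 * (1 - γ)^3 * ε^2 * (q * (1 - q)) := by
    have hγ2' : (0:ℝ) < γ^2 := by positivity
    rw [← mul_le_mul_iff_of_pos_right hγ2']
    have hL : 4 * d^2 * γ^2 = 784 * (1 - γ)^4 * ε^2 := by
      have h' : (d * γ)^2 = (14 * (1 - γ)^2 * ε)^2 := by rw [hdγ]
      nlinarith [h']
    rw [hL]
    have hnn : (0:ℝ) ≤ 784 * (1 - γ)^3 * ε^2 :=
      mul_nonneg (mul_nonneg (by positivity) (pow_nonneg h1γ.le 3)) (sq_nonneg ε)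
    have hstep := mul_le_mul_of_nonneg_left h16 hnn
    nlinarith [hstep]
  have hfin : (x - y)^2 / (y * (1 - y)) ≤ 12544 * (1 - γ)^3 * ε^2 := by
    rw [div_le_iff₀ (by positivity)]
    have h1 : (x - y)^2 = (1 - c)^2 * 4 * d^2 := by rw [hxy]; ring
    have h2 : (1 - c)^2 * 4 * d^2 ≤ (1 - c) * (4 * d^2) := by
      nlinarith [sq_nonneg d, mul_nonneg hc0 (sub_nonneg.mpr (by linarith : c ≤ 1))]
    have h3 : (1 - c) * (4 * d^2) ≤ (1 - c) * (12544 * (1 - γ)^3 * ε^2 * (q * (1 - q))) :=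
      mul_le_mul_of_nonneg_left hmain (by linarith)
    have h4 : (1 - c) * (12544 * (1 - γ)^3 * ε^2 * (q * (1 - q)))
        ≤ 12544 * (1 - γ)^3 * ε^2 * (y * (1 - y)) := by
      have hnn : (0:ℝ) ≤ 12544 * (1 - γ)^3 * ε^2 := by positivity
      have := mul_le_mul_of_nonneg_left hylb hnn
      nlinarith [this]
    linarith
  calc bernKL x y ≤ (x - y)^2 / (y * (1 - y)) := key
    _ ≤ 12544 * (1 - γ)^3 * ε^2 := hfin
end

section
/- Let a₁ ≤ a₂ ≤ ⋯ ≤ a_H be nonnegative reals, and let x₁,…,x_H ∈ [0, x_max] satisfy Σ_{i=1}^H x_i ≥ x_sum. Then Σ_{i=1}^{H} x_i a_i ≥ x_max · Σ_{i=1}^{⌊x_sum/x_max⌋} a_i. -/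
theorem stmt18 (H : ℕ) (hH : 1 ≤ H) (a x : ℕ → ℝ) (xmax xsum : ℝ)
    (hxmax : 0 < xmax) (hxsum : 0 ≤ xsum)
    (hfloor : Nat.floor (xsum / xmax) ≤ H)
    (ha0 : ∀ i, 0 ≤ a i)
    (hamono : ∀ i j, 1 ≤ i → i ≤ j → j ≤ H → a i ≤ a j)
    (hx : ∀ i, 1 ≤ i → i ≤ H → x i ∈ Set.Icc 0 xmax)
    (hsum : xsum ≤ ∑ i ∈ Finset.Icc 1 H, x i) :
    xmax * ∑ i ∈ Finset.Icc 1 (Nat.floor (xsum / xmax)), a i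
      ≤ ∑ i ∈ Finset.Icc 1 H, x i * a i := by
  set k := Nat.floor (xsum / xmax) with hkdef
  have hIcc : ∀ n : ℕ, Finset.Icc 1 n = Finset.Ioc 0 n := fun n =>
    Finset.Icc_add_one_left_eq_Ioc 0 n
  rcases Nat.eq_zero_or_pos k with hk0 | hk1
  · rw [hk0]
    simp only [Finset.Icc_self, Finset.Icc_eq_empty_of_lt (by norm_num : (1:ℕ) > 0),
      Finset.sum_empty, mul_zero]
    apply Finset.sum_nonneg
    intro i hi
    rw [Finset.mem_Icc] at hi
    exact mul_nonneg (hx i hi.1 hi.2).1 (ha0 i)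
  · have hkx : (k : ℝ) * xmax ≤ xsum := by
      rw [← le_div_iff₀ hxmax]
      exact Nat.floor_le (by positivity)
    rw [hIcc, hIcc]
    have hsplit : (∑ i ∈ Finset.Ioc 0 k, x i * a i) + (∑ i ∈ Finset.Ioc k H, x i * a i)
        = ∑ i ∈ Finset.Ioc 0 H, x i * a i :=
      Finset.sum_Ioc_consecutive _ (Nat.zero_le k) hfloor
    have hsplitx : (∑ i ∈ Finset.Ioc 0 k, x i) + (∑ i ∈ Finset.Ioc k H, x i)
        = ∑ i ∈ Finset.Ioc 0 H, x i :=
      Finset.sum_Ioc_consecutive _ (Nat.zero_le k) hfloor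
    set T := ∑ i ∈ Finset.Ioc 0 k, x i with hT
    -- lower bound for the tail
    have htail : a k * ((k : ℝ) * xmax - T) ≤ ∑ i ∈ Finset.Ioc k H, x i * a i := by
      have h1 : ∀ i ∈ Finset.Ioc k H, a k * x i ≤ x i * a i := by
        intro i hi
        rw [Finset.mem_Ioc] at hi
        have hak : a k ≤ a i := hamono k i hk1 hi.1.le hi.2
        have hxi := hx i (le_trans hk1 hi.1.le) hi.2
        rw [mul_comm]
        exact mul_le_mul_of_nonneg_left hak hxi.1
      calc a k * ((k : ℝ) * xmax - T)
          ≤ a k * (xsum - T) := by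
            apply mul_le_mul_of_nonneg_left _ (ha0 k); linarith
        _ ≤ a k * (∑ i ∈ Finset.Ioc k H, x i) := by
            apply mul_le_mul_of_nonneg_left _ (ha0 k)
            rw [hIcc] at hsum; linarith
        _ = ∑ i ∈ Finset.Ioc k H, a k * x i := Finset.mul_sum _ _ _
        _ ≤ ∑ i ∈ Finset.Ioc k H, x i * a i := Finset.sum_le_sum h1
    -- head bound
    have hhead : xmax * ∑ i ∈ Finset.Ioc 0 k, a i
        ≤ (∑ i ∈ Finset.Ioc 0 k, x i * a i) + a k * ((k : ℝ) * xmax - T) := by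
      have hcard : (Finset.Ioc 0 k).card = k := by simp
      have hexp : a k * ((k : ℝ) * xmax - T) = ∑ i ∈ Finset.Ioc 0 k, a k * (xmax - x i) := by
        have : (k : ℝ) * xmax - T = ∑ i ∈ Finset.Ioc 0 k, (xmax - x i) := by
          rw [Finset.sum_sub_distrib, Finset.sum_const, hcard, ← hT, nsmul_eq_mul]
        rw [this, Finset.mul_sum]
      rw [hexp, Finset.mul_sum, ← Finset.sum_add_distrib]
      apply Finset.sum_le_sum
      intro i hi
      rw [Finset.mem_Ioc] at hi
      have hai : a i ≤ a k := hamono i k hi.1 hi.2 hfloor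
      have hxi := hx i hi.1 (le_trans hi.2 hfloor)
      nlinarith [hxi.1, hxi.2]
    linarith
end
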